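/- Let K be a self-adjoint orthogonal projection operator on L²(ℝ₊) whose range consists of functions of the form p(x) e^{−x/2} with p a polynomial of degree < n. Let P_u be multiplication by 1_{[u,∞)} for u > 0. Then the operator norm of P_u K P_u is strictly less than 1. -/

import Mathlib

open MeasureTheory Real

namespace PKPaux

noncomputable abbrev μ0 : Measure ℝ := volume.restrict (Set.Ioi 0)
noncomputable abbrev H := Lp ℝ 2 μ0

lemma poly_uniq {p q : Polynomial ℝ}
    (h : (fun x => p.eval x * Real.exp (-x/2)) =ᵐ[μ0] fun x => q.eval x * Real.exp (-x/2)) :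
    p = q := by
  by_contra hne
  have hpq : p - q ≠ 0 := sub_ne_zero.mpr hne
  have hfin : Set.Finite {x : ℝ | (p - q).IsRoot x} := Polynomial.finite_setOf_isRoot hpq
  have h' : ∀ᵐ x ∂μ0, x ∈ {x : ℝ | (p - q).IsRoot x} := by
    filter_upwards [h] with x hx
    have := mul_right_cancel₀ (Real.exp_ne_zero (-x/2)) hx
    simp [Polynomial.IsRoot, this]
  have h0 : μ0 {x : ℝ | (p - q).IsRoot x} = 0 :=
    le_antisymm ((Measure.restrict_le_self _).trans_eq (hfin.measure_zero _)) zero_le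
  have h1 : μ0 {x : ℝ | (p - q).IsRoot x}ᶜ = 0 := ae_iff.mp h'
  have : μ0 Set.univ = 0 := by
    rw [← Set.union_compl_self {x : ℝ | (p - q).IsRoot x}]
    exact measure_union_null h0 h1
  rw [Measure.restrict_apply_univ, Real.volume_Ioi] at this
  simp at this

lemma norm_sq_eq (f : H) : ‖f‖ ^ 2 = ∫ x, f x * f x ∂μ0 := by
  rw [← real_inner_self_eq_norm_sq, L2.inner_def]
  simp [RCLike.inner_apply, pow_two]


noncomputable def V (n : ℕ) : Submodule ℝ H where
  carrier := {g : H | ∃ p : Polynomial ℝ, p.degree < n ∧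
    (g : ℝ → ℝ) =ᵐ[μ0] fun x => p.eval x * Real.exp (-x/2)}
  zero_mem' := by
    refine ⟨0, ?_, ?_⟩
    · rw [Polynomial.degree_zero]; exact WithBot.bot_lt_coe n
    · filter_upwards [Lp.coeFn_zero ℝ 2 μ0] with x hx
      simpa using hx
  add_mem' := by
    rintro a b ⟨p, hp, hpe⟩ ⟨q, hq, hqe⟩
    refine ⟨p + q, lt_of_le_of_lt (Polynomial.degree_add_le p q) (max_lt hp hq), ?_⟩
    filter_upwards [Lp.coeFn_add a b, hpe, hqe] with x h1 h2 h3
    calc ((a + b : H) : ℝ → ℝ) x = a x + b x := h1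
      _ = (p + q).eval x * Real.exp (-x/2) := by rw [h2, h3]; simp [add_mul]
  smul_mem' := by
    rintro c a ⟨p, hp, hpe⟩
    refine ⟨c • p, lt_of_le_of_lt (Polynomial.degree_smul_le c p) hp, ?_⟩
    filter_upwards [Lp.coeFn_smul c a, hpe] with x h1 h2
    calc ((c • a : H) : ℝ → ℝ) x = c • a x := h1
      _ = (c • p).eval x * Real.exp (-x/2) := by
        rw [h2]; simp [smul_eq_mul, mul_assoc]

noncomputable def toPoly {n : ℕ} (g : V n) : Polynomial ℝ := g.2.choose

lemma toPoly_deg {n : ℕ} (g : V n) : (toPoly g).degree < n := g.2.choose_spec.1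

lemma toPoly_ae {n : ℕ} (g : V n) :
    ((g : H) : ℝ → ℝ) =ᵐ[μ0] fun x => (toPoly g).eval x * Real.exp (-x/2) :=
  g.2.choose_spec.2

lemma toPoly_unique {n : ℕ} (g : V n) {p : Polynomial ℝ}
    (h : ((g : H) : ℝ → ℝ) =ᵐ[μ0] fun x => p.eval x * Real.exp (-x/2)) : toPoly g = p :=
  poly_uniq ((toPoly_ae g).symm.trans h)

noncomputable def phi (n : ℕ) : V n →ₗ[ℝ] Polynomial ℝ where
  toFun := toPoly
  map_add' g h := by
    apply toPoly_unique
    filter_upwards [Lp.coeFn_add (g : H) (h : H), toPoly_ae g, toPoly_ae h] with x h1 h2 h3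
    calc ((g + h : V n) : H) x = (g : H) x + (h : H) x := h1
      _ = (toPoly g + toPoly h).eval x * Real.exp (-x/2) := by rw [h2, h3]; simp [add_mul]
  map_smul' c g := by
    apply toPoly_unique
    filter_upwards [Lp.coeFn_smul c (g : H), toPoly_ae g] with x h1 h2
    calc ((c • g : V n) : H) x = c • (g : H) x := h1
      _ = (c • toPoly g).eval x * Real.exp (-x/2) := by
        rw [h2]; simp [smul_eq_mul, mul_assoc]

lemma phi_inj (n : ℕ) : Function.Injective (phi n) := by
  intro g h heq
  have hpq : toPoly g = toPoly h := heq
  apply Subtype.ext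
  apply Lp.ext (p := 2) (μ := μ0)
  filter_upwards [toPoly_ae g, toPoly_ae h] with x h1 h2
  rw [h1, h2, hpq]

lemma finDimV (n : ℕ) : FiniteDimensional ℝ (V n) := by
  haveI : FiniteDimensional ℝ (Polynomial.degreeLT ℝ n) :=
    LinearEquiv.finiteDimensional (Polynomial.degreeLTEquiv ℝ n).symm
  exact Module.Finite.of_injective
    ((phi n).codRestrict (Polynomial.degreeLT ℝ n)
      (fun g => Polynomial.mem_degreeLT.mpr (toPoly_deg g)))
    (fun a b hab => phi_inj n (Subtype.ext_iff.mp hab))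

lemma key {n : ℕ} (u : ℝ) (hu : 0 < u) (P : H →L[ℝ] H)
    (hP : ∀ f : H, (P f : ℝ → ℝ) =ᵐ[μ0] Set.indicator (Set.Ici u) (f : ℝ → ℝ))
    {g : H} (hg : g ∈ V n) (hg0 : g ≠ 0) : ‖P g‖ < ‖g‖ := by
  obtain ⟨p, hpd, hpe⟩ := hg
  have hp0 : p ≠ 0 := by
    rintro rfl
    exact hg0 (Lp.eq_zero_iff_ae_eq_zero.mpr
      (by filter_upwards [hpe] with x hx; simpa using hx))
  set F : ℝ → ℝ := fun x => p.eval x * Real.exp (-x/2) with hF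
  have hFc : Continuous F := by
    exact (p.continuous_aeval).mul (Real.continuous_exp.comp (by continuity))
  have hgsq : Integrable (fun x => (g : ℝ → ℝ) x * (g : ℝ → ℝ) x) μ0 := by
    have := (Lp.memLp g).integrable_sq
    simpa [pow_two] using this
  have hFsq : Integrable (fun x => F x * F x) μ0 :=
    hgsq.congr (by filter_upwards [hpe] with x hx; rw [hx])
  have hnormg : ‖g‖ ^ 2 = ∫ x, F x * F x ∂μ0 := by
    rw [norm_sq_eq g]
    exact integral_congr_ae (by filter_upwards [hpe] with x hx; rw [hx])
  have hPgae : (P g : ℝ → ℝ) =ᵐ[μ0] Set.indicator (Set.Ici u) F := by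
    filter_upwards [hP g, hpe] with x h1 h2
    rw [h1]
    by_cases hx : x ∈ Set.Ici u <;> simp [Set.indicator, hx, h2]
  have hnormPg : ‖P g‖ ^ 2 = ∫ x, Set.indicator (Set.Ici u) (fun x => F x * F x) x ∂μ0 := by
    rw [norm_sq_eq (P g)]
    refine integral_congr_ae ?_
    filter_upwards [hPgae] with x hx
    rw [hx]
    by_cases hmem : x ∈ Set.Ici u <;> simp [Set.indicator, hmem]
  have hsplit : ‖g‖ ^ 2 - ‖P g‖ ^ 2
      = ∫ x, Set.indicator (Set.Iio u) (fun x => F x * F x) x ∂μ0 := by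
    rw [hnormg, hnormPg, ← integral_sub hFsq (hFsq.indicator measurableSet_Ici)]
    refine integral_congr_ae (Filter.Eventually.of_forall fun x => ?_)
    by_cases hmem : x ∈ Set.Ici u
    · have hx2 : x ∉ Set.Iio u := by simp at hmem ⊢; linarith
      simp [Set.indicator, hmem, hx2]
    · have hx2 : x ∈ Set.Iio u := by simp at hmem ⊢; linarith
      simp [Set.indicator, hmem, hx2]
  have hpos : 0 < ∫ x, Set.indicator (Set.Iio u) (fun x => F x * F x) x ∂μ0 := by
    rw [integral_indicator measurableSet_Iio, Measure.restrict_restrict measurableSet_Iio,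
      show Set.Iio u ∩ Set.Ioi (0:ℝ) = Set.Ioo 0 u by rw [Set.inter_comm, Set.Ioi_inter_Iio]]
    have hint : IntegrableOn (fun x => F x * F x) (Set.Ioo 0 u) volume :=
      ((hFc.mul hFc).integrableOn_Icc (a := 0) (b := u)).mono_set Set.Ioo_subset_Icc_self
    rw [setIntegral_pos_iff_support_of_nonneg_ae
      (Filter.Eventually.of_forall fun x => mul_self_nonneg (F x)) hint]
    have hsub : Set.Ioo 0 u ⊆
        (Function.support (fun x => F x * F x) ∩ Set.Ioo 0 u) ∪ {x : ℝ | p.IsRoot x} := by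
      intro x hx
      by_cases hr : p.eval x = 0
      · exact Or.inr hr
      · refine Or.inl ⟨?_, hx⟩
        simp only [Function.mem_support, hF]
        intro hcon
        rcases mul_eq_zero.mp hcon with h | h <;>
          exact absurd (mul_eq_zero.mp (by linarith [h] : p.eval x * Real.exp (-x/2) = 0))
            (by push_neg; exact ⟨hr, Real.exp_ne_zero _⟩)
    by_contra hle
    push_neg at hle
    have h0 : volume (Function.support (fun x => F x * F x) ∩ Set.Ioo 0 u) = 0 :=
      le_antisymm hle zero_le
    have hroots : volume {x : ℝ | p.IsRoot x} = 0 :=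
      (Polynomial.finite_setOf_isRoot hp0).measure_zero _
    have := (measure_mono (μ := volume) hsub).trans (measure_union_le _ _)
    rw [h0, hroots, Real.volume_Ioo] at this
    simp only [zero_add, nonpos_iff_eq_zero, ENNReal.ofReal_eq_zero] at this
    linarith
  have hsq : ‖P g‖ ^ 2 < ‖g‖ ^ 2 := by linarith [hsplit ▸ hpos]
  exact lt_of_pow_lt_pow_left₀ 2 (norm_nonneg g) hsq

end PKPaux

open PKPaux

/-- Let `K` be a self-adjoint orthogonal projection on `L²(ℝ₊)`
whose range consists of functions `p(x) e^{−x/2}` with `p` a polynomial of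
degree `< n`, and let `P_u` be multiplication by `1_{[u,∞)}` with `u > 0`.
Then `‖P_u K P_u‖ < 1`. -/
theorem norm_PKP_lt_one
    (n : ℕ) (u : ℝ) (hu : 0 < u)
    (K P : Lp ℝ 2 (volume.restrict (Set.Ioi (0 : ℝ))) →L[ℝ]
           Lp ℝ 2 (volume.restrict (Set.Ioi (0 : ℝ))))
    (hKsa : IsSelfAdjoint K)
    (hKproj : K ∘L K = K)
    (hrange : ∀ f, ∃ p : Polynomial ℝ, p.degree < n ∧
      (K f : ℝ → ℝ) =ᵐ[volume.restrict (Set.Ioi (0 : ℝ))]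
        fun x => p.eval x * Real.exp (-x / 2))
    (hP : ∀ f, (P f : ℝ → ℝ) =ᵐ[volume.restrict (Set.Ioi (0 : ℝ))]
        Set.indicator (Set.Ici u) (f : ℝ → ℝ)) :
    ‖P ∘L K ∘L P‖ < 1 := by
  haveI : FiniteDimensional ℝ (V n) := finDimV n
  have hKle : ∀ h, ‖K h‖ ≤ ‖h‖ := by
    intro h
    rcases eq_or_ne (K h) 0 with h0 | h0
    · rw [h0, norm_zero]; exact norm_nonneg h
    · have hsym := hKsa.isSymmetric
      have e2 : K (K h) = K h := by rw [← ContinuousLinearMap.comp_apply, hKproj]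
      have e3 : ‖K h‖ ^ 2 = (inner ℝ h (K h) : ℝ) := by
        rw [← real_inner_self_eq_norm_sq]
        simpa [e2] using hsym h (K h)
      have e4 : (inner ℝ h (K h) : ℝ) ≤ ‖h‖ * ‖K h‖ := real_inner_le_norm h (K h)
      have hpos : 0 < ‖K h‖ := norm_pos_iff.mpr h0
      nlinarith [e3, e4, hpos]
  have hPle : ∀ h, ‖P h‖ ≤ ‖h‖ := fun h =>
    Lp.norm_le_norm_of_ae_le (by
      filter_upwards [hP h] with x hx
      rw [hx]; exact norm_indicator_le_norm_self _ _)
  obtain ⟨g₀, hg₀mem, hmax⟩ := (isCompact_closedBall (0 : V n) 1).exists_isMaxOn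
      ⟨0, Metric.mem_closedBall_self zero_le_one⟩
      ((P.continuous.comp continuous_subtype_val).norm.continuousOn)
  have hc1 : ‖P (g₀ : Lp ℝ 2 (volume.restrict (Set.Ioi (0 : ℝ))))‖ < 1 := by
    rcases eq_or_ne ((g₀ : Lp ℝ 2 (volume.restrict (Set.Ioi (0 : ℝ))))) 0 with h0 | h0
    · rw [h0, map_zero, norm_zero]; exact one_pos
    · have hk := key u hu P hP g₀.2 h0
      have hle : ‖(g₀ : Lp ℝ 2 (volume.restrict (Set.Ioi (0 : ℝ))))‖ ≤ 1 := by
        have h1 := Metric.mem_closedBall.mp hg₀mem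
        rw [dist_zero_right] at h1
        simpa [Submodule.coe_norm] using h1
      exact hk.trans_le hle
  refine lt_of_le_of_lt (ContinuousLinearMap.opNorm_le_bound _ (norm_nonneg _) ?_) hc1
  intro f
  rw [ContinuousLinearMap.comp_apply, ContinuousLinearMap.comp_apply]
  have hgV : K (P f) ∈ V n := hrange (P f)
  rcases eq_or_ne (K (P f)) 0 with h0 | h0
  · rw [h0, map_zero, norm_zero]; positivity
  · have hgn : 0 < ‖K (P f)‖ := norm_pos_iff.mpr h0
    have hmem : (‖K (P f)‖⁻¹ • (⟨K (P f), hgV⟩ : V n)) ∈ Metric.closedBall (0 : V n) 1 := by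
      rw [Metric.mem_closedBall, dist_zero_right, norm_smul, norm_inv, Real.norm_eq_abs,
        abs_of_pos hgn]
      have hco : ‖(⟨K (P f), hgV⟩ : V n)‖ = ‖K (P f)‖ := rfl
      rw [hco, inv_mul_cancel₀ hgn.ne']
    have h2 := hmax hmem
    have hco : ((‖K (P f)‖⁻¹ • (⟨K (P f), hgV⟩ : V n) : V n) :
        Lp ℝ 2 (volume.restrict (Set.Ioi (0 : ℝ)))) = ‖K (P f)‖⁻¹ • K (P f) := rfl
    simp only [Set.mem_setOf_eq, Function.comp_apply] at h2
    rw [hco, _root_.map_smul, norm_smul, norm_inv, Real.norm_eq_abs, abs_of_pos hgn] at h2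
    have h3 : ‖P (K (P f))‖ ≤ ‖P (g₀ : Lp ℝ 2 (volume.restrict (Set.Ioi (0 : ℝ))))‖
        * ‖K (P f)‖ := by rw [mul_comm]; exact (inv_mul_le_iff₀ hgn).mp h2
    refine h3.trans ?_
    exact mul_le_mul_of_nonneg_left ((hKle (P f)).trans (hPle f)) (norm_nonneg _)
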